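/- Let n ≥ 1 and let M_Z^n be the normed space on H = {x ∈ ℝ^{n+1} : Σᵢ x(i) = 0} with norm ‖x‖_Z = ½(maxᵢ x(i) − minᵢ x(i)). The largest cardinality of a set of unit vectors in M_Z^n that are at pairwise distance 2 is C(n+1, ⌊(n+1)/2⌋); that is, the maximum size of a set S ⊆ H with ‖p‖_Z = 1 for all p ∈ S and ‖p − q‖_Z = 2 for all distinct p, q ∈ S equals C(n+1, ⌊(n+1)/2⌋). -/

import Mathlib

/-- The norm of the space `M_Z^n`: `‖x‖_Z = ½(maxᵢ x(i) − minᵢ x(i))`. -/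
noncomputable def normZ {n : ℕ} (x : Fin (n + 1) → ℝ) : ℝ :=
  (Finset.univ.sup' Finset.univ_nonempty x - Finset.univ.inf' Finset.univ_nonempty x) / 2

open Finset

lemma sup'_eq_of {m : ℕ} (f : Fin (m + 1) → ℝ) (c : ℝ) (hub : ∀ i, f i ≤ c)
    (hex : ∃ i, f i = c) : Finset.univ.sup' Finset.univ_nonempty f = c := by
  obtain ⟨i, hi⟩ := hex
  exact le_antisymm (Finset.sup'_le _ _ fun j _ => hub j) (hi ▸ Finset.le_sup' f (mem_univ i))

lemma inf'_eq_of {m : ℕ} (f : Fin (m + 1) → ℝ) (c : ℝ) (hlb : ∀ i, c ≤ f i)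
    (hex : ∃ i, f i = c) : Finset.univ.inf' Finset.univ_nonempty f = c := by
  obtain ⟨i, hi⟩ := hex
  exact le_antisymm (hi ▸ Finset.inf'_le f (mem_univ i)) (Finset.le_inf' _ _ fun j _ => hlb j)

/-- The largest number of unit vectors in `M_Z^n` at pairwise distance `2` equals the
binomial coefficient `C(n+1, ⌊(n+1)/2⌋)`. -/
theorem max_unit_vectors_pairwise_distance_two (n : ℕ) (hn : 1 ≤ n) :
    IsGreatest {c : ℕ | ∃ S : Finset (Fin (n + 1) → ℝ), S.card = c ∧
        (∀ p ∈ S, ∑ i, p i = 0) ∧ (∀ p ∈ S, normZ p = 1) ∧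
        (∀ p ∈ S, ∀ q ∈ S, p ≠ q → normZ (p - q) = 2)}
      (Nat.choose (n + 1) ((n + 1) / 2)) := by
  classical
  constructor
  · -- Lower bound: construction
    set k : ℕ := (n + 1) / 2 with hkdef
    have hk1 : 1 ≤ k := by omega
    have hkn : k ≤ n := by omega
    have hNpos : (0 : ℝ) < (n + 1 : ℕ) := by positivity
    set a : ℝ := 2 * ((n + 1 : ℕ) - (k : ℝ)) / (n + 1 : ℕ) with hadef
    set b : ℝ := 2 * (k : ℝ) / (n + 1 : ℕ) with hbdef
    have hkR : (k : ℝ) ≤ n := by exact_mod_cast hkn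
    have hnR : ((n : ℝ)) < (n + 1 : ℕ) := by push_cast; linarith
    have ha : 0 < a := by
      apply div_pos _ hNpos
      have : (k : ℝ) < (n + 1 : ℕ) := lt_of_le_of_lt hkR hnR
      linarith
    have hb : 0 < b := by
      apply div_pos _ hNpos
      have : (1 : ℝ) ≤ k := by exact_mod_cast hk1
      linarith
    have hab : a + b = 2 := by
      rw [hadef, hbdef]
      field_simp
      ring
    set L : Finset (Finset (Fin (n + 1))) := (Finset.univ : Finset (Fin (n + 1))).powersetCard k with hLdef
    set f : Finset (Fin (n + 1)) → (Fin (n + 1) → ℝ) :=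
      fun A i => if i ∈ A then a else -b with hfdef
    -- basic facts about sets in the layer
    have hmem : ∀ A ∈ L, A.card = k ∧ A.Nonempty ∧ ∃ i, i ∉ A := by
      intro A hA
      rw [mem_powersetCard] at hA
      refine ⟨hA.2, Finset.card_pos.mp (by omega), ?_⟩
      by_contra h
      push_neg at h
      have : A = Finset.univ := Finset.eq_univ_of_forall h
      have : A.card = n + 1 := by rw [this, Finset.card_univ, Fintype.card_fin]
      omega
    have hsup : ∀ A ∈ L,
        Finset.univ.sup' Finset.univ_nonempty (f A) = a := by
      intro A hA
      obtain ⟨_, ⟨i, hi⟩, _⟩ := hmem A hA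
      apply sup'_eq_of
      · intro j
        by_cases hj : j ∈ A <;> simp [hfdef, hj] <;> linarith
      · exact ⟨i, by simp [hfdef, hi]⟩
    have hinf : ∀ A ∈ L,
        Finset.univ.inf' Finset.univ_nonempty (f A) = -b := by
      intro A hA
      obtain ⟨_, _, ⟨i, hi⟩⟩ := hmem A hA
      apply inf'_eq_of
      · intro j
        by_cases hj : j ∈ A <;> simp [hfdef, hj] <;> linarith
      · exact ⟨i, by simp [hfdef, hi]⟩
    have hinj : Set.InjOn f (L) := by
      intro A hA B hB hAB
      ext i
      constructor
      · intro hi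
        by_contra hB'
        have := congrFun hAB i
        simp [hfdef, hi, hB'] at this
        linarith
      · intro hi
        by_contra hA'
        have := congrFun hAB i
        simp [hfdef, hi, hA'] at this
        linarith
    refine ⟨(L).image f, ?_, ?_, ?_, ?_⟩
    · rw [Finset.card_image_of_injOn hinj, Finset.card_powersetCard, Finset.card_univ,
        Fintype.card_fin]
    · -- sums are zero
      intro p hp
      obtain ⟨A, hA, rfl⟩ := Finset.mem_image.mp hp
      obtain ⟨hAcard, _, _⟩ := hmem A hA
      have hfa : (Finset.univ.filter (· ∈ A)) = A := by simp
      have hfb : (Finset.univ.filter (fun i => i ∉ A)) = Finset.univ \ A := by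
        ext i; simp
      have hsum1 : ∑ i, f A i = (A.card : ℝ) * a + ((Finset.univ \ A).card : ℝ) * (-b) := by
        rw [hfdef]
        simp only []
        rw [Finset.sum_ite, hfa, hfb, Finset.sum_const, Finset.sum_const,
          nsmul_eq_mul, nsmul_eq_mul]
      have hcard2 : (Finset.univ \ A).card = n + 1 - k := by
        rw [Finset.card_sdiff_of_subset (Finset.subset_univ A), Finset.card_univ, Fintype.card_fin, hAcard]
      rw [hsum1, hAcard, hcard2]
      have hcast : ((n + 1 - k : ℕ) : ℝ) = ((n + 1 : ℕ) : ℝ) - (k : ℝ) := by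
        rw [Nat.cast_sub (by omega)]
      rw [hcast, hadef, hbdef]
      field_simp
      ring
    · -- norms are 1
      intro p hp
      obtain ⟨A, hA, rfl⟩ := Finset.mem_image.mp hp
      rw [normZ, hsup A hA, hinf A hA]
      linarith
    · -- pairwise distances
      intro p hp q hq hpq
      obtain ⟨A, hA, rfl⟩ := Finset.mem_image.mp hp
      obtain ⟨B, hB, rfl⟩ := Finset.mem_image.mp hq
      have hABne : A ≠ B := fun h => hpq (by rw [h])
      obtain ⟨hAcard, _, _⟩ := hmem A hA
      obtain ⟨hBcard, _, _⟩ := hmem B hB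
      have hASB : ∃ i, i ∈ A ∧ i ∉ B := by
        by_contra h
        push_neg at h
        exact hABne (Finset.eq_of_subset_of_card_le h (by omega))
      have hBSA : ∃ i, i ∈ B ∧ i ∉ A := by
        by_contra h
        push_neg at h
        exact hABne (Finset.eq_of_subset_of_card_le h (by omega)).symm
      have hsup2 : Finset.univ.sup' Finset.univ_nonempty (f A - f B) = 2 := by
        apply sup'_eq_of
        · intro j
          simp only [Pi.sub_apply, hfdef]
          by_cases h1 : j ∈ A <;> by_cases h2 : j ∈ B <;> simp [h1, h2] <;> linarith
        · obtain ⟨i, hi1, hi2⟩ := hASB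
          exact ⟨i, by simp [Pi.sub_apply, hfdef, hi1, hi2]; linarith⟩
      have hinf2 : Finset.univ.inf' Finset.univ_nonempty (f A - f B) = -2 := by
        apply inf'_eq_of
        · intro j
          simp only [Pi.sub_apply, hfdef]
          by_cases h1 : j ∈ A <;> by_cases h2 : j ∈ B <;> simp [h1, h2] <;> linarith
        · obtain ⟨i, hi1, hi2⟩ := hBSA
          exact ⟨i, by simp [Pi.sub_apply, hfdef, hi1, hi2]; linarith⟩
      rw [normZ, hsup2, hinf2]
      norm_num
  · -- Upper bound
    rintro c ⟨S, rfl, hsum, hnorm, hdist⟩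
    set A : (Fin (n + 1) → ℝ) → Finset (Fin (n + 1)) :=
      fun p => Finset.univ.filter (fun i => p i = Finset.univ.sup' Finset.univ_nonempty p)
      with hAdef
    -- key: for distinct p q in S, there is i with p i = sup p and q i = inf q
    have hkey : ∀ p ∈ S, ∀ q ∈ S, p ≠ q → ∃ i,
        p i = Finset.univ.sup' Finset.univ_nonempty p ∧
        q i = Finset.univ.inf' Finset.univ_nonempty q := by
      intro p hp q hq hpq
      have h1 : Finset.univ.sup' Finset.univ_nonempty p -
          Finset.univ.inf' Finset.univ_nonempty p = 2 := by
        have := hnorm p hp; rw [normZ] at this; linarith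
      have h2 : Finset.univ.sup' Finset.univ_nonempty q -
          Finset.univ.inf' Finset.univ_nonempty q = 2 := by
        have := hnorm q hq; rw [normZ] at this; linarith
      have h3 : Finset.univ.sup' Finset.univ_nonempty (p - q) -
          Finset.univ.inf' Finset.univ_nonempty (p - q) = 4 := by
        have := hdist p hp q hq hpq; rw [normZ] at this; linarith
      have hub : Finset.univ.sup' Finset.univ_nonempty (p - q) ≤
          Finset.univ.sup' Finset.univ_nonempty p - Finset.univ.inf' Finset.univ_nonempty q := by
        apply Finset.sup'_le
        intro j _
        have hj1 : p j ≤ Finset.univ.sup' Finset.univ_nonempty p := Finset.le_sup' p (mem_univ j)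
        have hj2 : Finset.univ.inf' Finset.univ_nonempty q ≤ q j := Finset.inf'_le q (mem_univ j)
        simp only [Pi.sub_apply]
        linarith
      have hlb : Finset.univ.inf' Finset.univ_nonempty p - Finset.univ.sup' Finset.univ_nonempty q
          ≤ Finset.univ.inf' Finset.univ_nonempty (p - q) := by
        apply Finset.le_inf'
        intro j _
        have hj1 : Finset.univ.inf' Finset.univ_nonempty p ≤ p j := Finset.inf'_le p (mem_univ j)
        have hj2 : q j ≤ Finset.univ.sup' Finset.univ_nonempty q := Finset.le_sup' q (mem_univ j)
        simp only [Pi.sub_apply]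
        linarith
      obtain ⟨i, _, hi⟩ := Finset.exists_mem_eq_sup' (Finset.univ_nonempty) (p - q)
      have hiv : p i - q i = Finset.univ.sup' Finset.univ_nonempty (p - q) := by
        simpa [Pi.sub_apply] using hi.symm
      have hp1 : p i ≤ Finset.univ.sup' Finset.univ_nonempty p := Finset.le_sup' p (mem_univ i)
      have hq1 : Finset.univ.inf' Finset.univ_nonempty q ≤ q i := Finset.inf'_le q (mem_univ i)
      exact ⟨i, by linarith, by linarith⟩
    have hnotsub : ∀ p ∈ S, ∀ q ∈ S, p ≠ q → ¬ A p ⊆ A q := by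
      intro p hp q hq hpq hsub
      obtain ⟨i, hi1, hi2⟩ := hkey p hp q hq hpq
      have hiA : i ∈ A p := by simp [hAdef, hi1]
      have := hsub hiA
      simp only [hAdef, mem_filter, mem_univ, true_and] at this
      have h2 : Finset.univ.sup' Finset.univ_nonempty q -
          Finset.univ.inf' Finset.univ_nonempty q = 2 := by
        have := hnorm q hq; rw [normZ] at this; linarith
      rw [hi2] at this
      linarith
    have hinjA : Set.InjOn A S := by
      intro p hp q hq h
      by_contra hpq
      exact hnotsub p hp q hq hpq (h ▸ Finset.Subset.refl _)
    have hanti : IsAntichain (· ⊆ ·) ((S.image A : Finset (Finset (Fin (n + 1)))) :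
        Set (Finset (Fin (n + 1)))) := by
      intro x hx y hy hxy
      simp only [coe_image, Set.mem_image, mem_coe] at hx hy
      obtain ⟨p, hp, rfl⟩ := hx
      obtain ⟨q, hq, rfl⟩ := hy
      have hpq : p ≠ q := fun h => hxy (by rw [h])
      exact hnotsub p hp q hq hpq
    have := IsAntichain.sperner hanti
    rw [Finset.card_image_of_injOn hinjA] at this
    simpa using this
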